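/- A linear functional λ on Π(ℝ^d) satisfies λ(p) = 0 for all p of degree ≤ k if and only if (λ⊗λ)(‖x−y‖^(2r)) = 0 for all integers r with 0 ≤ r ≤ k. -/

import Mathlib

open MvPolynomial Finset

noncomputable section

/-- The multi-index on the first (`x`) block of variables of a monomial in `Fin d ⊕ Fin d`. -/
def xpart {d : ℕ} (m : (Fin d ⊕ Fin d) →₀ ℕ) : Fin d →₀ ℕ :=
  Finsupp.equivFunOnFinite.symm fun i => m (Sum.inl i)

/-- The multi-index on the second (`y`) block of variables. -/
def ypart {d : ℕ} (m : (Fin d ⊕ Fin d) →₀ ℕ) : Fin d →₀ ℕ :=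
  Finsupp.equivFunOnFinite.symm fun i => m (Sum.inr i)

/-- `(l ⊗ m) f`: apply `l` in the `x`-variables and `m` in the `y`-variables of a
two-block polynomial `f`, via its canonical representation as a sum of products
of monomials in `x` and monomials in `y`. -/
def tensorApply {d : ℕ} (l m : Module.Dual ℝ (MvPolynomial (Fin d) ℝ))
    (f : MvPolynomial (Fin d ⊕ Fin d) ℝ) : ℝ :=
  ∑ mo ∈ f.support, f.coeff mo * l (monomial (xpart mo) 1) * m (monomial (ypart mo) 1)

/-- Apply the linear functional `l` in the second (`y`) block of variables,
yielding a polynomial in the first (`x`) block of variables. -/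
def applySecond {d : ℕ} (l : Module.Dual ℝ (MvPolynomial (Fin d) ℝ))
    (f : MvPolynomial (Fin d ⊕ Fin d) ℝ) : MvPolynomial (Fin d) ℝ :=
  ∑ mo ∈ f.support, monomial (xpart mo) (f.coeff mo * l (monomial (ypart mo) 1))

/-- The polynomial `(x,y) ↦ ‖x-y‖^(2k)` in the `2d` variables `x(1),…,x(d),y(1),…,y(d)`. -/
def distPoly (d k : ℕ) : MvPolynomial (Fin d ⊕ Fin d) ℝ :=
  (∑ i : Fin d, (X (Sum.inl i) - X (Sum.inr i)) ^ 2) ^ k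

/-- `l` vanishes on all polynomials of total degree `< k` (i.e. `l ⊥ Π_{<k}`). -/
def VanishesLT {d : ℕ} (l : Module.Dual ℝ (MvPolynomial (Fin d) ℝ)) (k : ℕ) : Prop :=
  ∀ p : MvPolynomial (Fin d) ℝ, p.totalDegree < k → l p = 0

/-- `l` vanishes on all polynomials of total degree `≤ k` (i.e. `l ⊥ Π_{≤k}`). -/
def VanishesLE {d : ℕ} (l : Module.Dual ℝ (MvPolynomial (Fin d) ℝ)) (k : ℕ) : Prop :=
  ∀ p : MvPolynomial (Fin d) ℝ, p.totalDegree ≤ k → l p = 0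

/-- `p_{a,β} : x ↦ ‖x‖^(2a) x^β` as a polynomial. -/
def pPoly (d : ℕ) (a : ℕ) (β : Fin d →₀ ℕ) : MvPolynomial (Fin d) ℝ :=
  (∑ i : Fin d, X i ^ 2) ^ a * monomial β 1

/-! ### Auxiliary lemmas -/

section Aux

variable {d : ℕ} (l m : Module.Dual ℝ (MvPolynomial (Fin d) ℝ))

lemma tensorApply_eq_sum (f : MvPolynomial (Fin d ⊕ Fin d) ℝ) :
    tensorApply l m f
      = Finsupp.sum (AddMonoidAlgebra.coeff f) fun mo c => c * l (monomial (xpart mo) 1) * m (monomial (ypart mo) 1) := rfl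

lemma tensorApply_add (f g : MvPolynomial (Fin d ⊕ Fin d) ℝ) :
    tensorApply l m (f + g) = tensorApply l m f + tensorApply l m g := by
  simp only [tensorApply_eq_sum]
  exact Finsupp.sum_add_index' (by simp) (by intros; ring)

lemma tensorApply_smul (c : ℝ) (f : MvPolynomial (Fin d ⊕ Fin d) ℝ) :
    tensorApply l m (c • f) = c * tensorApply l m f := by
  simp only [tensorApply_eq_sum]
  rw [AddMonoidAlgebra.coeff_smul]
  rw [Finsupp.sum_smul_index' (by intros; simp), Finsupp.mul_sum]
  congr 1; ext mo a; simp [smul_eq_mul]; ring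

/-- `tensorApply` as a linear map. -/
def tensorL {d : ℕ} (l m : Module.Dual ℝ (MvPolynomial (Fin d) ℝ)) :
    MvPolynomial (Fin d ⊕ Fin d) ℝ →ₗ[ℝ] ℝ where
  toFun := tensorApply l m
  map_add' := tensorApply_add l m
  map_smul' c f := tensorApply_smul l m c f

lemma tensorApply_monomial (mo : (Fin d ⊕ Fin d) →₀ ℕ) (c : ℝ) :
    tensorApply l m (monomial mo c)
      = c * l (monomial (xpart mo) 1) * m (monomial (ypart mo) 1) := by
  rw [tensorApply_eq_sum]
  simp

lemma xpart_mapDomain (α β : Fin d →₀ ℕ) :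
    xpart (Finsupp.mapDomain Sum.inl α + Finsupp.mapDomain Sum.inr β) = α := by
  ext i
  simp [xpart, Finsupp.mapDomain_apply Sum.inl_injective, Finsupp.mapDomain_notin_range]

lemma ypart_mapDomain (α β : Fin d →₀ ℕ) :
    ypart (Finsupp.mapDomain Sum.inl α + Finsupp.mapDomain Sum.inr β) = β := by
  ext i
  simp [ypart, Finsupp.mapDomain_apply Sum.inr_injective, Finsupp.mapDomain_notin_range]

lemma tensorApply_rename_mul (p q : MvPolynomial (Fin d) ℝ) :
    tensorApply l m (rename Sum.inl p * rename Sum.inr q) = l p * m q := by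
  induction p using MvPolynomial.induction_on' with
  | add p p' hp hp' =>
    rw [map_add, add_mul, tensorApply_add, hp, hp', map_add, add_mul]
  | monomial α a =>
    induction q using MvPolynomial.induction_on' with
    | add q q' hq hq' =>
      rw [map_add, mul_add, tensorApply_add, hq, hq', map_add, mul_add]
    | monomial β b =>
      rw [rename_monomial, rename_monomial, monomial_mul, tensorApply_monomial,
        xpart_mapDomain, ypart_mapDomain]
      have h1 : (monomial α a : MvPolynomial (Fin d) ℝ) = a • monomial α 1 := by
        simp [smul_monomial]
      have h2 : (monomial β b : MvPolynomial (Fin d) ℝ) = b • monomial β 1 := by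
        simp [smul_monomial]
      rw [h1, h2, map_smul, map_smul]
      simp; ring

end Aux

/-- `‖x‖²` as a polynomial. -/
def Spoly (d : ℕ) : MvPolynomial (Fin d) ℝ := ∑ i : Fin d, X i ^ 2

/-- `⟨x,y⟩` as a polynomial in the two blocks of variables. -/
def Ppoly (d : ℕ) : MvPolynomial (Fin d ⊕ Fin d) ℝ :=
  ∑ i : Fin d, rename Sum.inl (X i) * rename Sum.inr (X i)

section Aux2

variable {d : ℕ} (l m : Module.Dual ℝ (MvPolynomial (Fin d) ℝ))

lemma prod_X_pow_univ (k : Fin d → ℕ) :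
    (∏ i : Fin d, (X i : MvPolynomial (Fin d) ℝ) ^ k i)
      = monomial (Finsupp.equivFunOnFinite.symm k) 1 := by
  rw [← prod_X_pow_eq_monomial]
  refine (Finset.prod_subset (subset_univ _) ?_).symm
  intro i _ hi
  have : (Finsupp.equivFunOnFinite.symm k) i = 0 := by
    simpa [Finsupp.notMem_support_iff] using hi
  simp only [Finsupp.equivFunOnFinite_symm_apply_apply] at this ⊢
  simp [this]

lemma tensor_SSP (a c b : ℕ) :
    tensorL l m ((rename Sum.inl (Spoly d))^a * (rename Sum.inr (Spoly d))^c * (Ppoly d)^b)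
      = ∑ k ∈ piAntidiag (univ : Finset (Fin d)) b,
          (Nat.multinomial univ k : ℝ) *
            (l (pPoly d a (Finsupp.equivFunOnFinite.symm k)) *
             m (pPoly d c (Finsupp.equivFunOnFinite.symm k))) := by
  classical
  rw [Ppoly, sum_pow_eq_sum_piAntidiag, Finset.mul_sum, map_sum]
  refine Finset.sum_congr rfl fun k hk => ?_
  set K : MvPolynomial (Fin d) ℝ := monomial (Finsupp.equivFunOnFinite.symm k) 1 with hK
  have h1 : (∏ i : Fin d, ((rename Sum.inl (X i) : MvPolynomial (Fin d ⊕ Fin d) ℝ)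
        * rename Sum.inr (X i)) ^ k i)
      = rename Sum.inl K * rename Sum.inr K := by
    calc (∏ i : Fin d, ((rename Sum.inl (X i) : MvPolynomial (Fin d ⊕ Fin d) ℝ)
          * rename Sum.inr (X i)) ^ k i)
        = (∏ i : Fin d, rename Sum.inl ((X i : MvPolynomial (Fin d) ℝ) ^ k i))
          * ∏ i : Fin d, rename Sum.inr ((X i : MvPolynomial (Fin d) ℝ) ^ k i) := by
          simp [mul_pow, Finset.prod_mul_distrib, map_pow]
      _ = rename Sum.inl K * rename Sum.inr K := by
          rw [← map_prod, ← map_prod, prod_X_pow_univ]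
  rw [h1]
  have h2 : (rename Sum.inl (Spoly d))^a * (rename Sum.inr (Spoly d))^c *
      ((Nat.multinomial univ k : MvPolynomial (Fin d ⊕ Fin d) ℝ)
        * (rename Sum.inl K * rename Sum.inr K))
      = (Nat.multinomial univ k : ℝ)
          • (rename Sum.inl ((Spoly d)^a * K) * rename Sum.inr ((Spoly d)^c * K)) := by
    rw [Nat.cast_smul_eq_nsmul ℝ, nsmul_eq_mul]
    rw [map_mul, map_mul, map_pow, map_pow]
    ring
  rw [h2, map_smul]
  have h3 : tensorL l m (rename Sum.inl ((Spoly d)^a * K) * rename Sum.inr ((Spoly d)^c * K))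
      = l ((Spoly d)^a * K) * m ((Spoly d)^c * K) := tensorApply_rename_mul l m _ _
  rw [smul_eq_mul, h3]
  rfl

lemma sumsq_eq :
    (∑ i : Fin d, ((X (Sum.inl i) : MvPolynomial (Fin d ⊕ Fin d) ℝ) - X (Sum.inr i)) ^ 2)
      = (-2:ℝ) • Ppoly d
        + (rename Sum.inl (Spoly d) + rename Sum.inr (Spoly d)) := by
  rw [Ppoly, Spoly, map_sum, map_sum, Finset.smul_sum, ← Finset.sum_add_distrib,
    ← Finset.sum_add_distrib]
  refine Finset.sum_congr rfl fun i _ => ?_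
  simp only [smul_eq_C_mul, map_pow, rename_X, map_neg, map_ofNat]
  ring

/-- Trinomial expansion of `tensorApply l m (distPoly d r)`. -/
lemma tensor_distPoly_expand (r : ℕ) :
    tensorL l m (distPoly d r)
      = ∑ b ∈ Finset.range (r+1), ∑ a ∈ Finset.range (r-b+1),
          ((r.choose b : ℝ) * ((r-b).choose a : ℝ) * (-2:ℝ)^b)
            * ∑ k ∈ piAntidiag (univ : Finset (Fin d)) b,
                (Nat.multinomial univ k : ℝ) *
                  (l (pPoly d a (Finsupp.equivFunOnFinite.symm k)) *
                   m (pPoly d (r-b-a) (Finsupp.equivFunOnFinite.symm k))) := by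
  rw [distPoly, sumsq_eq, add_pow]
  rw [map_sum]
  refine Finset.sum_congr rfl fun b hb => ?_
  rw [add_pow, Finset.mul_sum, Finset.sum_mul, map_sum]
  refine Finset.sum_congr rfl fun a ha => ?_
  have hterm : ((-2:ℝ) • Ppoly d) ^ b *
        ((rename Sum.inl (Spoly d)) ^ a * (rename Sum.inr (Spoly d)) ^ (r - b - a)
          * ((r-b).choose a : MvPolynomial (Fin d ⊕ Fin d) ℝ))
        * (r.choose b : MvPolynomial (Fin d ⊕ Fin d) ℝ)
      = ((r.choose b : ℝ) * ((r-b).choose a : ℝ) * (-2:ℝ)^b)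
          • ((rename Sum.inl (Spoly d)) ^ a * (rename Sum.inr (Spoly d)) ^ (r - b - a)
              * (Ppoly d) ^ b) := by
    simp only [smul_pow, smul_eq_C_mul,
      ← map_natCast (C : ℝ →+* MvPolynomial (Fin d ⊕ Fin d) ℝ), map_mul, map_pow]
    ring
  rw [hterm, map_smul, smul_eq_mul, tensor_SSP]

end Aux2

section Deg

variable {d : ℕ}

lemma totalDegree_pPoly_le (a : ℕ) (β : Fin d →₀ ℕ) :
    (pPoly d a β).totalDegree ≤ 2*a + β.degree := by
  refine (totalDegree_mul _ _).trans (add_le_add ?_ ?_)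
  · refine (totalDegree_pow _ _).trans ?_
    have : (Spoly d).totalDegree ≤ 2 := by
      rw [Spoly]
      refine totalDegree_finsetSum_le fun i _ => ?_
      simpa using totalDegree_X_pow (R := ℝ) i 2
    calc a * (∑ i : Fin d, (X i:MvPolynomial (Fin d) ℝ) ^ 2).totalDegree
        ≤ a * 2 := Nat.mul_le_mul_left a this
      _ = 2 * a := Nat.mul_comm a 2
  · refine (totalDegree_monomial_le _ _).trans ?_
    exact le_of_eq rfl

lemma degree_sum_eq (n : ℕ) (s : Fin n →₀ ℕ) : s.degree = ∑ i : Fin n, s i := by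
  rw [Finsupp.degree]
  exact Finset.sum_subset (subset_univ _) (by simp [Finsupp.notMem_support_iff])

lemma degree_split (mo : (Fin d ⊕ Fin d) →₀ ℕ) :
    mo.degree = (xpart mo).degree + (ypart mo).degree := by
  have h2 : mo.degree = ∑ j : Fin d ⊕ Fin d, mo j := by
    rw [Finsupp.degree]
    exact Finset.sum_subset (subset_univ _) (by simp [Finsupp.notMem_support_iff])
  rw [h2, Fintype.sum_sum_type, degree_sum_eq, degree_sum_eq]
  simp [xpart, ypart]

lemma distPoly_homog (r : ℕ) : (distPoly d r).IsHomogeneous (2 * r) := by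
  have h : (∑ i : Fin d, ((X (Sum.inl i) : MvPolynomial (Fin d ⊕ Fin d) ℝ)
      - X (Sum.inr i)) ^ 2).IsHomogeneous 2 := by
    apply IsHomogeneous.sum
    intro i _
    simpa using (((isHomogeneous_X ℝ (Sum.inl i)).sub (isHomogeneous_X ℝ (Sum.inr i))).pow 2)
  simpa [distPoly] using h.pow r

lemma monomial_degree_le (β : Fin d →₀ ℕ) :
    (monomial β (1:ℝ)).totalDegree ≤ β.degree :=
  (totalDegree_monomial_le _ _).trans (le_of_eq rfl)

end Deg

/-! ### Main argument -/

section Main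

variable {d : ℕ}

lemma vanishesLT_of_monomials {l : Module.Dual ℝ (MvPolynomial (Fin d) ℝ)} {r : ℕ}
    (h : ∀ β : Fin d →₀ ℕ, β.degree < r → l (monomial β 1) = 0) :
    VanishesLT l r := by
  intro p hp
  rw [p.as_sum, map_sum]
  refine Finset.sum_eq_zero fun v hv => ?_
  have hdeg : v.degree < r := by
    have := le_totalDegree hv
    exact lt_of_le_of_lt this hp
  have : (monomial v (coeff v p) : MvPolynomial (Fin d) ℝ) = (coeff v p) • monomial v 1 := by
    simp [smul_monomial]
  rw [this, map_smul, h v hdeg, smul_zero]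

lemma key_induction (k : ℕ) (l : Module.Dual ℝ (MvPolynomial (Fin d) ℝ))
    (hk : ∀ r : ℕ, r ≤ k → tensorApply l l (distPoly d r) = 0) :
    ∀ r : ℕ, r ≤ k → ∀ (a : ℕ) (β : Fin d →₀ ℕ), 2*a + β.degree = r →
      l (pPoly d a β) = 0 := by
  intro r
  induction r using Nat.strong_induction_on with
  | _ r IH =>
  intro hrk a β hab
  -- l vanishes on degrees < r
  have hlt : VanishesLT l r := by
    refine vanishesLT_of_monomials fun γ hγ => ?_
    have : l (pPoly d 0 γ) = 0 := IH γ.degree (by omega) (by omega) 0 γ (by omega)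
    simpa [pPoly] using this
  have hplt : ∀ (a' : ℕ) (γ : Fin d →₀ ℕ), 2*a' + γ.degree < r → l (pPoly d a' γ) = 0 := by
    intro a' γ h
    exact hlt _ (lt_of_le_of_lt (totalDegree_pPoly_le a' γ) h)
  -- the expansion
  have h0 : tensorL l l (distPoly d r) = 0 := hk r hrk
  rw [tensor_distPoly_expand] at h0
  -- each double-sum term, multiplied by (-1)^r, is nonnegative
  set G : ℕ → ℕ → ℝ := fun b a' =>
    ((-1:ℝ)^r) * (((r.choose b : ℝ) * ((r-b).choose a' : ℝ) * (-2:ℝ)^b)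
      * ∑ k ∈ piAntidiag (univ : Finset (Fin d)) b,
          (Nat.multinomial univ k : ℝ) *
            (l (pPoly d a' (Finsupp.equivFunOnFinite.symm k)) *
             l (pPoly d (r-b-a') (Finsupp.equivFunOnFinite.symm k)))) with hG
  have hdegk : ∀ b (k : Fin d → ℕ), k ∈ piAntidiag (univ : Finset (Fin d)) b →
      (Finsupp.equivFunOnFinite.symm k : Fin d →₀ ℕ).degree = b := by
    intro b k hkmem
    rw [Finset.mem_piAntidiag] at hkmem
    rw [degree_sum_eq]
    simpa using hkmem.1
  have hGnonneg : ∀ b ∈ Finset.range (r+1), ∀ a' ∈ Finset.range (r-b+1), 0 ≤ G b a' := by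
    intro b hb a' ha'
    rw [Finset.mem_range] at hb ha'
    rcases eq_or_ne a' (r - b - a') with hdiag | hoff
    · -- diagonal: 2a' + b = r, sign positive, sum of squares
      have h2a : 2*a' + b = r := by omega
      have hsign : ((-1:ℝ)^r) * ((-2:ℝ)^b) = 2^b := by
        have : (-2:ℝ)^b = (-1:ℝ)^b * 2^b := by
          rw [← neg_one_mul, mul_pow]
        rw [this, ← mul_assoc, ← pow_add]
        have : Even (r + b) := ⟨a' + b, by omega⟩
        rw [this.neg_one_pow, one_mul]
      have hsum : 0 ≤ ∑ k ∈ piAntidiag (univ : Finset (Fin d)) b,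
          (Nat.multinomial univ k : ℝ) *
            (l (pPoly d a' (Finsupp.equivFunOnFinite.symm k)) *
             l (pPoly d (r-b-a') (Finsupp.equivFunOnFinite.symm k))) := by
        refine Finset.sum_nonneg fun k hkmem => ?_
        rw [← hdiag]
        exact mul_nonneg (Nat.cast_nonneg _) (mul_self_nonneg _)
      have hGeq : G b a' = ((r.choose b : ℝ) * ((r-b).choose a' : ℝ))
          * (((-1:ℝ)^r * (-2:ℝ)^b)
            * ∑ k ∈ piAntidiag (univ : Finset (Fin d)) b,
                (Nat.multinomial univ k : ℝ) *
                  (l (pPoly d a' (Finsupp.equivFunOnFinite.symm k)) *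
                   l (pPoly d (r-b-a') (Finsupp.equivFunOnFinite.symm k)))) := by
        rw [hG]; ring
      rw [hGeq, hsign]
      positivity
    · -- off-diagonal: inner sum is zero
      have hzero : ∀ k ∈ piAntidiag (univ : Finset (Fin d)) b,
          (Nat.multinomial univ k : ℝ) *
            (l (pPoly d a' (Finsupp.equivFunOnFinite.symm k)) *
             l (pPoly d (r-b-a') (Finsupp.equivFunOnFinite.symm k))) = 0 := by
        intro k hkmem
        have hdk := hdegk b k hkmem
        rcases lt_or_gt_of_ne hoff with hlt' | hgt'
        · have : l (pPoly d a' (Finsupp.equivFunOnFinite.symm k)) = 0 := by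
            refine hplt a' _ ?_
            rw [hdk]; omega
          rw [this]; ring
        · have : l (pPoly d (r-b-a') (Finsupp.equivFunOnFinite.symm k)) = 0 := by
            refine hplt (r-b-a') _ ?_
            rw [hdk]; omega
          rw [this]; ring
      rw [hG]
      simp only
      rw [Finset.sum_congr rfl hzero]
      simp
  -- sum of the G's is zero
  have hGsum : ∑ b ∈ Finset.range (r+1), ∑ a' ∈ Finset.range (r-b+1), G b a' = 0 := by
    have : ∑ b ∈ Finset.range (r+1), ∑ a' ∈ Finset.range (r-b+1), G b a'
        = ((-1:ℝ)^r) * ∑ b ∈ Finset.range (r+1), ∑ a' ∈ Finset.range (r-b+1),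
            (((r.choose b : ℝ) * ((r-b).choose a' : ℝ) * (-2:ℝ)^b)
              * ∑ k ∈ piAntidiag (univ : Finset (Fin d)) b,
                  (Nat.multinomial univ k : ℝ) *
                    (l (pPoly d a' (Finsupp.equivFunOnFinite.symm k)) *
                     l (pPoly d (r-b-a') (Finsupp.equivFunOnFinite.symm k)))) := by
      rw [Finset.mul_sum]
      refine Finset.sum_congr rfl fun b _ => ?_
      rw [Finset.mul_sum]
    rw [this, h0, mul_zero]
  -- hence each G vanishes
  have hGzero : ∀ b ∈ Finset.range (r+1), ∀ a' ∈ Finset.range (r-b+1), G b a' = 0 := by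
    intro b hb a' ha'
    have houter := (Finset.sum_eq_zero_iff_of_nonneg
      (fun b hb => Finset.sum_nonneg (hGnonneg b hb))).mp hGsum b hb
    exact (Finset.sum_eq_zero_iff_of_nonneg (hGnonneg b hb)).mp houter a' ha'
  -- specialize to b = degree β, a' = a
  set b := β.degree with hbdef
  have hbr : b = r - 2*a := by omega
  have hbmem : b ∈ Finset.range (r+1) := by rw [Finset.mem_range]; omega
  have hamem : a ∈ Finset.range (r-b+1) := by rw [Finset.mem_range]; omega
  have hG0 := hGzero b hbmem a hamem
  have hra : r - b - a = a := by omega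
  simp only [hG] at hG0
  rw [hra] at hG0
  -- strip the positive prefactor
  have hsign : ((-1:ℝ)^r) * ((-2:ℝ)^b) = 2^b := by
    have h2 : (-2:ℝ)^b = (-1:ℝ)^b * 2^b := by rw [← neg_one_mul, mul_pow]
    rw [h2, ← mul_assoc, ← pow_add]
    have : Even (r + b) := ⟨a + b, by omega⟩
    rw [this.neg_one_pow, one_mul]
  have hS0 : ∑ k ∈ piAntidiag (univ : Finset (Fin d)) b,
      (Nat.multinomial univ k : ℝ) *
        (l (pPoly d a (Finsupp.equivFunOnFinite.symm k)) *
         l (pPoly d a (Finsupp.equivFunOnFinite.symm k))) = 0 := by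
    have hfac : ((r.choose b : ℝ) * ((r-b).choose a : ℝ) * 2^b) ≠ 0 := by
      have h1 : 0 < r.choose b := Nat.choose_pos (by omega)
      have h2 : 0 < (r-b).choose a := Nat.choose_pos (by omega)
      positivity
    have : ((r.choose b : ℝ) * ((r-b).choose a : ℝ) * 2^b)
        * ∑ k ∈ piAntidiag (univ : Finset (Fin d)) b,
            (Nat.multinomial univ k : ℝ) *
              (l (pPoly d a (Finsupp.equivFunOnFinite.symm k)) *
               l (pPoly d a (Finsupp.equivFunOnFinite.symm k))) = 0 := by
      rw [← hG0]; rw [← hsign]; ring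
    exact (mul_eq_zero.mp this).resolve_left hfac
  -- each summand is a nonnegative multiple of a square, so each vanishes
  have hterm := (Finset.sum_eq_zero_iff_of_nonneg
    (fun k _ => mul_nonneg (Nat.cast_nonneg _) (mul_self_nonneg _))).mp hS0 (⇑β) ?memb
  · have hβ : Finsupp.equivFunOnFinite.symm (⇑β) = β := by
      ext i; simp
    rw [hβ] at hterm
    have hmultpos : (0:ℝ) < (Nat.multinomial univ ⇑β : ℝ) := by
      exact_mod_cast Nat.multinomial_pos _ _
    have := mul_eq_zero.mp hterm
    rcases this with h | h
    · exact absurd h (ne_of_gt hmultpos)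
    · exact pow_eq_zero_iff (n := 2) (by norm_num) |>.mp (by
        have : l (pPoly d a β) * l (pPoly d a β) = l (pPoly d a β)^2 := by ring
        rw [← this]; exact h)
  · rw [Finset.mem_piAntidiag]
    refine ⟨?_, fun i _ => Finset.mem_univ i⟩
    rw [← degree_sum_eq]

end Main

/-- `λ ⊥ Π_{≤k}` iff `(λ⊗λ)‖x−y‖^(2r) = 0` for all `0 ≤ r ≤ k`. -/
theorem vanishesLE_iff_tensor_sq_dist_eq_zero (d k : ℕ)
    (l : Module.Dual ℝ (MvPolynomial (Fin d) ℝ)) :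
    VanishesLE l k ↔ ∀ r : ℕ, r ≤ k → tensorApply l l (distPoly d r) = 0 := by
  constructor
  · intro h r hr
    rw [tensorApply]
    refine Finset.sum_eq_zero fun mo hmo => ?_
    have hcoeff : coeff mo (distPoly d r) ≠ 0 := mem_support_iff.mp hmo
    have hdeg : mo.degree = 2*r := by
      by_contra hne
      exact hcoeff ((distPoly_homog r).coeff_eq_zero hne)
    have hsplit := degree_split mo
    rcases le_or_gt (xpart mo).degree r with hx | hx
    · have h0 : l (monomial (xpart mo) 1) = 0 := h _ ((monomial_degree_le _).trans (hx.trans hr))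
      rw [h0]; ring
    · have hy : (ypart mo).degree ≤ r := by omega
      have h0 : l (monomial (ypart mo) 1) = 0 := h _ ((monomial_degree_le _).trans (hy.trans hr))
      rw [h0]; ring
  · intro h p hp
    rw [p.as_sum, map_sum]
    refine Finset.sum_eq_zero fun v hv => ?_
    have hdeg : v.degree ≤ k := le_trans (le_totalDegree hv) hp
    have h0 : l (monomial v 1) = 0 := by
      have := key_induction k l h v.degree hdeg 0 v (by omega)
      simpa [pPoly] using this
    have hmono : (monomial v (coeff v p)) = coeff v p • monomial v 1 := by simp [smul_monomial]
    rw [hmono, map_smul, h0, smul_zero]
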